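/- For the type theory Glob (whose types are Obj and Hom A t u, whose only terms are variables, with the standard context, type, term and substitution judgments), the action of substitution is admissible: if Γ ⊢ A and Δ ⊢ γ : Γ then Δ ⊢ A[γ]; if Γ ⊢ t : A and Δ ⊢ γ : Γ then Δ ⊢ t[γ] : A[γ]; composition of derivable substitutions is derivable; and the identity substitution id_Γ is derivable for every derivable context Γ. -/

import Mathlib

namespace Glob

/-- Types of the theory `Glob`: `Obj` and `Hom A t u`, where terms are just variables
(represented as natural numbers). -/
inductive Ty : Type
  | obj : Ty
  | hom : Ty → ℕ → ℕ → Ty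
deriving DecidableEq

/-- Contexts: lists of typed variables (most recently declared variable first). -/
abbrev Ctx := List (ℕ × Ty)

/-- Substitutions: lists of variable/term assignments (most recent first). -/
abbrev Sub := List (ℕ × ℕ)

/-- Action of a substitution on a term (a variable). -/
def lookupSub (x : ℕ) : Sub → ℕ
  | [] => x
  | (y, u) :: γ => if x = y then u else lookupSub x γ

/-- Action of a substitution on a type. -/
def Ty.sub : Ty → Sub → Ty
  | .obj, _ => .obj
  | .hom A t u, γ => .hom (A.sub γ) (lookupSub t γ) (lookupSub u γ)

/-- Composition of substitutions. -/
def Sub.comp : Sub → Sub → Sub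
  | [], _ => []
  | (x, t) :: δ, γ => (x, lookupSub t γ) :: Sub.comp δ γ

/-- The identity substitution of a context. -/
def idSub (Γ : Ctx) : Sub := Γ.map (fun p => (p.1, p.1))

/-- The set of variables declared in a context. -/
def Ctx.domvars (Γ : Ctx) : Set ℕ := {x | ∃ A, (x, A) ∈ Γ}

mutual
  /-- Derivability of contexts in the theory `Glob`. -/
  inductive CtxDer : Ctx → Prop
    | nil : CtxDer []
    | ext {Γ : Ctx} {A : Ty} {x : ℕ} :
        CtxDer Γ → TyDer Γ A → x ∉ Ctx.domvars Γ → CtxDer ((x, A) :: Γ)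
  /-- Derivability of types. -/
  inductive TyDer : Ctx → Ty → Prop
    | obj {Γ : Ctx} : CtxDer Γ → TyDer Γ .obj
    | hom {Γ : Ctx} {A : Ty} {t u : ℕ} :
        TyDer Γ A → TmDer Γ t A → TmDer Γ u A → TyDer Γ (.hom A t u)
  /-- Derivability of terms. -/
  inductive TmDer : Ctx → ℕ → Ty → Prop
    | var {Γ : Ctx} {x : ℕ} {A : Ty} : CtxDer Γ → (x, A) ∈ Γ → TmDer Γ x A
  /-- Derivability of substitutions. -/
  inductive SubDer : Ctx → Sub → Ctx → Prop
    | nil {Δ : Ctx} : CtxDer Δ → SubDer Δ [] []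
    | cons {Δ : Ctx} {γ : Sub} {Γ : Ctx} {x : ℕ} {A : Ty} {t : ℕ} :
        SubDer Δ γ Γ → TyDer Γ A → x ∉ Ctx.domvars Γ → TmDer Δ t (A.sub γ) →
        SubDer Δ ((x, t) :: γ) ((x, A) :: Γ)
end

/-- The dimension of a type, shifted so that `dimN Obj = 0`
(the paper's dimension is `dimN - 1`). -/
def Ty.dimN : Ty → ℕ
  | .obj => 0
  | .hom A _ _ => A.dimN + 1

/-- The types `U_n` of the disk and sphere contexts. -/
def U : ℕ → Ty
  | 0 => .obj
  | n + 1 => .hom (U n) (2 * n) (2 * n + 1)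

/-- The sphere contexts; `SphC n` is the context `S^{n-1}` of the paper
(so that `SphC 0` is the empty context `S^{-1}`). -/
def SphC : ℕ → Ctx
  | 0 => []
  | n + 1 => (2 * n + 1, U n) :: (2 * n, U n) :: SphC n

/-- The disk contexts `D^n`. -/
def DiskC (n : ℕ) : Ctx := (2 * n, U n) :: SphC n

end Glob


namespace Glob

theorem subder_ctx {Δ : Ctx} {γ : Sub} {Γ : Ctx} (h : SubDer Δ γ Γ) : CtxDer Δ := by
  cases h with
  | nil h => exact h
  | cons _ _ _ ht => cases ht with | var h _ => exact h

theorem tm_mem {Γ : Ctx} {t : ℕ} {A : Ty} (h : TmDer Γ t A) : t ∈ Ctx.domvars Γ := by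
  cases h with | var _ hm => exact ⟨A, hm⟩

/-- Fresh extension of a substitution doesn't change the action on a derivable type. -/
theorem sub_fresh : ∀ (A : Ty) {Γ : Ctx} {x t : ℕ} (γ : Sub), TyDer Γ A →
    x ∉ Ctx.domvars Γ → A.sub ((x, t) :: γ) = A.sub γ
  | .obj, _, _, _, _, _, _ => rfl
  | .hom A u v, Γ, x, t, γ, h, hx => by
    cases h with
    | hom hA hu hv =>
      have hux : u ≠ x := fun e => hx (e ▸ tm_mem hu)
      have hvx : v ≠ x := fun e => hx (e ▸ tm_mem hv)
      simp [Ty.sub, lookupSub, hux, hvx, sub_fresh A γ hA hx]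

/-- Derivable types of entries of a derivable context, in a sub-context. -/
theorem mem_ty : ∀ (Γ : Ctx) {x : ℕ} {A : Ty}, CtxDer Γ → (x, A) ∈ Γ →
    ∃ S : Ctx, TyDer S A ∧ Ctx.domvars S ⊆ Ctx.domvars Γ
  | [], _, _, _, hm => absurd hm List.not_mem_nil
  | (y, B) :: Γ, x, A, hc, hm => by
    cases hc with
    | ext hΓ hB hy =>
      rcases List.mem_cons.1 hm with h | h
      · cases h
        exact ⟨Γ, hB, fun z ⟨C, hz⟩ => ⟨C, List.mem_cons_of_mem _ hz⟩⟩
      · obtain ⟨S, h1, h2⟩ := mem_ty Γ hΓ h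
        exact ⟨S, h1, fun z hz => by
          obtain ⟨C, hC⟩ := h2 hz; exact ⟨C, List.mem_cons_of_mem _ hC⟩⟩

/-- Substitution admissibility for terms. -/
theorem tm_sub : ∀ (Γ : Ctx) {t : ℕ} {A : Ty} {Δ : Ctx} {γ : Sub},
    TmDer Γ t A → SubDer Δ γ Γ → TmDer Δ (lookupSub t γ) (A.sub γ)
  | [], t, A, Δ, γ, ht, hγ => by
    cases ht with | var _ hm => exact absurd hm List.not_mem_nil
  | (y, B) :: Γ, t, A, Δ, γ, ht, hγ => by
    cases hγ with
    | cons hγ hB hy hs =>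
      rename_i γ' s
      cases ht with
      | var hc hm =>
        rcases List.mem_cons.1 hm with h | h
        · cases h
          simpa [lookupSub, sub_fresh B γ' hB hy] using hs
        · have hty : t ≠ y := by
            intro e
            exact hy (e ▸ ⟨A, h⟩)
          have hΓ : CtxDer Γ := by cases hc with | ext h _ _ => exact h
          obtain ⟨S, hA, hsub⟩ := mem_ty Γ hΓ h
          have hyS : y ∉ Ctx.domvars S := fun hz => hy (hsub hz)
          have := tm_sub Γ (TmDer.var hΓ h) hγ
          simpa [lookupSub, hty, sub_fresh A γ' hA hyS] using this

/-- Substitution admissibility for types. -/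
theorem ty_sub : ∀ (A : Ty) {Γ Δ : Ctx} {γ : Sub},
    TyDer Γ A → SubDer Δ γ Γ → TyDer Δ (A.sub γ)
  | .obj, _, _, _, _, hγ => TyDer.obj (subder_ctx hγ)
  | .hom A u v, Γ, Δ, γ, h, hγ => by
    cases h with
    | hom hA hu hv =>
      exact TyDer.hom (ty_sub A hA hγ) (tm_sub Γ hu hγ) (tm_sub Γ hv hγ)

/-- Composition agrees with iterated lookup, on the domain of the substitution. -/
theorem lookup_comp : ∀ (Θ : Ctx) {t : ℕ} {A : Ty} {Γ : Ctx} {θ γ : Sub},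
    (t, A) ∈ Θ → SubDer Γ θ Θ →
    lookupSub (lookupSub t θ) γ = lookupSub t (Sub.comp θ γ)
  | [], _, _, _, _, _, hm, _ => absurd hm List.not_mem_nil
  | (y, B) :: Θ, t, A, Γ, θ, γ, hm, hθ => by
    cases hθ with
    | cons hθ hB hy hs =>
      rename_i θ' s
      rcases List.mem_cons.1 hm with h | h
      · cases h
        simp [lookupSub, Sub.comp]
      · have hty : t ≠ y := fun e => hy (e ▸ ⟨A, h⟩)
        simp [lookupSub, Sub.comp, hty, lookup_comp Θ h hθ]

/-- Substitution composition agrees with iterated substitution on derivable types. -/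
theorem sub_comp_ty : ∀ (A : Ty) {Θ Γ : Ctx} {θ γ : Sub},
    TyDer Θ A → SubDer Γ θ Θ → (A.sub θ).sub γ = A.sub (Sub.comp θ γ)
  | .obj, _, _, _, _, _, _ => rfl
  | .hom A u v, Θ, Γ, θ, γ, h, hθ => by
    cases h with
    | hom hA hu hv =>
      have hu' := tm_mem hu; have hv' := tm_mem hv
      obtain ⟨Au, hmu⟩ := hu'; obtain ⟨Av, hmv⟩ := hv'
      simp [Ty.sub, sub_comp_ty A hA hθ, lookup_comp Θ hmu hθ, lookup_comp Θ hmv hθ]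

/-- Composition of derivable substitutions is derivable. -/
theorem sub_comp_der : ∀ (Θ : Ctx) {Γ Δ : Ctx} {θ γ : Sub},
    SubDer Γ θ Θ → SubDer Δ γ Γ → SubDer Δ (Sub.comp θ γ) Θ
  | [], Γ, Δ, θ, γ, hθ, hγ => by
    cases hθ with
    | nil => exact SubDer.nil (subder_ctx hγ)
  | (x, A) :: Θ, Γ, Δ, θ, γ, hθ, hγ => by
    cases hθ with
    | cons hθ hA hx hs =>
      rename_i θ' t
      have h1 := sub_comp_der Θ hθ hγ
      have h2 := tm_sub Γ hs hγ
      rw [sub_comp_ty A hA hθ] at h2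
      exact SubDer.cons h1 hA hx h2

theorem lookup_id : ∀ (Γ : Ctx) (x : ℕ),
    lookupSub x (Γ.map fun p => (p.1, p.1)) = x
  | [], _ => rfl
  | (y, B) :: Γ, x => by
    show (if x = y then y else lookupSub x (Γ.map fun p => (p.1, p.1))) = x
    rw [lookup_id Γ x]
    split <;> simp_all

theorem sub_id : ∀ (A : Ty) (Γ : Ctx), A.sub (Γ.map fun p => (p.1, p.1)) = A
  | .obj, _ => rfl
  | .hom A u v, Γ => by simp [Ty.sub, sub_id A Γ, lookup_id]

theorem tm_weaken {Δ : Ctx} {t : ℕ} {A : Ty} {p : ℕ × Ty}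
    (h : TmDer Δ t A) (hc : CtxDer (p :: Δ)) : TmDer (p :: Δ) t A := by
  cases h with | var _ hm => exact TmDer.var hc (List.mem_cons_of_mem _ hm)

theorem sub_weaken : ∀ (Γ : Ctx) {Δ : Ctx} {γ : Sub} {p : ℕ × Ty},
    SubDer Δ γ Γ → CtxDer (p :: Δ) → SubDer (p :: Δ) γ Γ
  | [], Δ, γ, p, hγ, hc => by
    cases hγ with | nil => exact SubDer.nil hc
  | (x, A) :: Γ, Δ, γ, p, hγ, hc => by
    cases hγ with
    | cons hγ hA hx hs =>
      exact SubDer.cons (sub_weaken Γ hγ hc) hA hx (tm_weaken hs hc)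

theorem id_der : ∀ (Γ : Ctx), CtxDer Γ → SubDer Γ (idSub Γ) Γ
  | [], _ => SubDer.nil CtxDer.nil
  | (x, A) :: Γ, hc => by
    cases hc with
    | ext hΓ hA hx =>
      have hc' : CtxDer ((x, A) :: Γ) := CtxDer.ext hΓ hA hx
      refine SubDer.cons (sub_weaken Γ (id_der Γ hΓ) hc') hA hx ?_
      show TmDer ((x, A) :: Γ) x (A.sub (Γ.map fun p => (p.1, p.1)))
      rw [sub_id]
      exact TmDer.var hc' List.mem_cons_self

end Glob

open Glob in
/-- Admissibility of the action of substitutions in the theory `Glob`: substitution on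
types and terms preserves derivability, composition of derivable substitutions is
derivable, and the identity substitution of any derivable context is derivable. -/
theorem glob_substitution_admissible :
    (∀ (Γ : Ctx) (A : Ty) (Δ : Ctx) (γ : Sub),
        TyDer Γ A → SubDer Δ γ Γ → TyDer Δ (A.sub γ)) ∧
    (∀ (Γ : Ctx) (t : ℕ) (A : Ty) (Δ : Ctx) (γ : Sub),
        TmDer Γ t A → SubDer Δ γ Γ → TmDer Δ (lookupSub t γ) (A.sub γ)) ∧
    (∀ (Γ : Ctx) (θ : Sub) (Θ : Ctx) (Δ : Ctx) (γ : Sub),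
        SubDer Γ θ Θ → SubDer Δ γ Γ → SubDer Δ (Sub.comp θ γ) Θ) ∧
    (∀ Γ : Ctx, CtxDer Γ → SubDer Γ (idSub Γ) Γ) :=
  ⟨fun Γ A Δ γ h1 h2 => Glob.ty_sub A h1 h2,
   fun Γ t A Δ γ h1 h2 => Glob.tm_sub Γ h1 h2,
   fun Γ θ Θ Δ γ h1 h2 => Glob.sub_comp_der Θ h1 h2,
   fun Γ h => Glob.id_der Γ h⟩
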